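/- Let Σ ≻ 0 and M₁, …, M_k ⪰ 0 be d×d matrices. The set function f(T) := log det(Σ⁻¹ + ∑_{i∈T} M_i) is submodular: for T₁ ⊆ T₂ and j ∉ T₂, f(T₁ ∪ {j}) − f(T₁) ≥ f(T₂ ∪ {j}) − f(T₂). -/

import Mathlib

open Matrix

/-- det(1+Q) ≥ 1 for PSD Q, via spectral theorem. -/
private lemma det_one_add_psd {d : ℕ} {Q : Matrix (Fin d) (Fin d) ℝ}
    (hQ : Q.PosSemidef) : (1 : ℝ) ≤ (1 + Q).det := by
  have hH : Q.IsHermitian := hQ.isHermitian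
  have hspec := hH.spectral_theorem
  set U : Matrix (Fin d) (Fin d) ℝ := (hH.eigenvectorUnitary : Matrix (Fin d) (Fin d) ℝ)
  have hU : U ∈ unitaryGroup (Fin d) ℝ := hH.eigenvectorUnitary.2
  have hUU : U * star U = 1 := (mem_unitaryGroup_iff).mp hU
  have hUU' : star U * U = 1 := (mem_unitaryGroup_iff').mp hU
  have key : 1 + Q = U * (1 + diagonal (RCLike.ofReal ∘ hH.eigenvalues)) * star U := by
    rw [Matrix.mul_add, Matrix.add_mul, Matrix.mul_one, hUU]
    conv_lhs => rw [hspec, Unitary.conjStarAlgAut_apply]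
  rw [key, det_mul, det_mul, mul_comm, ← mul_assoc, ← det_mul, hUU', det_one, one_mul]
  have : (1 : Matrix (Fin d) (Fin d) ℝ) + diagonal (RCLike.ofReal ∘ hH.eigenvalues)
      = diagonal (fun i => 1 + hH.eigenvalues i) := by
    rw [← diagonal_one, diagonal_add]
    rfl
  rw [this, det_diagonal]
  calc (1 : ℝ) = ∏ _i : Fin d, 1 := by simp
    _ ≤ ∏ i, (1 + hH.eigenvalues i) := by
        apply Finset.prod_le_prod
        · intro i _; norm_num
        · intro i _
          linarith [hQ.eigenvalues_nonneg i]

/-- det is monotone under adding a PSD matrix to a PD matrix. -/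
private lemma det_mono_psd_add {d : ℕ} {X Q : Matrix (Fin d) (Fin d) ℝ}
    (hX : X.PosDef) (hQ : Q.PosSemidef) : X.det ≤ (X + Q).det := by
  classical
  set W := (open MatrixOrder in CFC.sqrt Q) with hWdef
  have hW : W * W = Q := by
    open MatrixOrder in exact CFC.sqrt_mul_sqrt_self Q (nonneg_iff_posSemidef.mpr hQ)
  have hWps : W.PosSemidef := by
    open MatrixOrder in exact nonneg_iff_posSemidef.mp (CFC.sqrt_nonneg Q)
  have hXinv : X⁻¹.PosDef := hX.inv
  have hXX : X * X⁻¹ = 1 := mul_nonsing_inv X (isUnit_iff_ne_zero.mpr hX.det_pos.ne')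
  have hfact : X + Q = X * (1 + X⁻¹ * W * W) := by
    rw [Matrix.mul_add, Matrix.mul_one, ← Matrix.mul_assoc, ← Matrix.mul_assoc, hXX,
      Matrix.one_mul, hW]
  have hdet : (X + Q).det = X.det * (1 + W * (X⁻¹ * W)).det := by
    rw [hfact, det_mul]
    congr 1
    exact det_one_add_mul_comm (X⁻¹ * W) W
  have hpsd : (W * (X⁻¹ * W)).PosSemidef := by
    have h : W * (X⁻¹ * W) = Wᴴ * X⁻¹ * W := by
      rw [hWps.isHermitian.eq, Matrix.mul_assoc]
    rw [h]
    exact hXinv.posSemidef.conjTranspose_mul_mul_same W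
  have h1 := det_one_add_psd hpsd
  have hXd : 0 < X.det := hX.det_pos
  calc X.det = X.det * 1 := (mul_one _).symm
    _ ≤ X.det * (1 + W * (X⁻¹ * W)).det := mul_le_mul_of_nonneg_left h1 hXd.le
    _ = (X + Q).det := hdet.symm

/-- A⁻¹ - (A+N)⁻¹ is PSD for A PD, N PSD. -/
private lemma inv_sub_inv_psd {d : ℕ} {A N : Matrix (Fin d) (Fin d) ℝ}
    (hA : A.PosDef) (hN : N.PosSemidef) : (A⁻¹ - (A + N)⁻¹).PosSemidef := by
  classical
  set B := A + N with hBdef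
  have hB : B.PosDef := hA.add_posSemidef hN
  have hAA : A * A⁻¹ = 1 := mul_nonsing_inv A (isUnit_iff_ne_zero.mpr hA.det_pos.ne')
  have hAA' : A⁻¹ * A = 1 := nonsing_inv_mul A (isUnit_iff_ne_zero.mpr hA.det_pos.ne')
  have hBB : B * B⁻¹ = 1 := mul_nonsing_inv B (isUnit_iff_ne_zero.mpr hB.det_pos.ne')
  have hBB' : B⁻¹ * B = 1 := nonsing_inv_mul B (isUnit_iff_ne_zero.mpr hB.det_pos.ne')
  have hmid : B * (A⁻¹ - B⁻¹) * B = N * A⁻¹ * N + N := by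
    have h1 : B * (A⁻¹ - B⁻¹) * B = B * A⁻¹ * B - B := by
      rw [Matrix.mul_sub, Matrix.sub_mul, Matrix.mul_assoc B B⁻¹ B, hBB', Matrix.mul_one]
    rw [h1, hBdef, Matrix.add_mul, hAA, Matrix.add_mul, Matrix.one_mul, Matrix.mul_add,
      Matrix.mul_assoc N A⁻¹ A, hAA', Matrix.mul_one]
    abel
  have key : A⁻¹ - B⁻¹ = B⁻¹ * (N * A⁻¹ * N + N) * B⁻¹ := by
    rw [← hmid]
    rw [← Matrix.mul_assoc, ← Matrix.mul_assoc, hBB', Matrix.one_mul,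
      Matrix.mul_assoc _ B B⁻¹, hBB, Matrix.mul_one]
  rw [key]
  have hsum : (N * A⁻¹ * N + N).PosSemidef := by
    have h1 : (N * A⁻¹ * N).PosSemidef := by
      have h : N * A⁻¹ * N = Nᴴ * A⁻¹ * N := by rw [hN.isHermitian.eq]
      rw [h]
      exact hA.inv.posSemidef.conjTranspose_mul_mul_same N
    exact h1.add hN
  have hBinvH : B⁻¹.IsHermitian := hB.isHermitian.inv
  have h : B⁻¹ * (N * A⁻¹ * N + N) * B⁻¹ = (B⁻¹)ᴴ * (N * A⁻¹ * N + N) * B⁻¹ := by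
    rw [hBinvH.eq]
  rw [h]
  exact hsum.conjTranspose_mul_mul_same B⁻¹

/-- Core determinant inequality: det(A+M+N)·det(A) ≤ det(A+M)·det(A+N). -/
private lemma det_submodular_core {d : ℕ} {A M N : Matrix (Fin d) (Fin d) ℝ}
    (hA : A.PosDef) (hM : M.PosSemidef) (hN : N.PosSemidef) :
    (A + M + N).det * A.det ≤ (A + M).det * (A + N).det := by
  classical
  set B := A + N with hBdef
  have hB : B.PosDef := hA.add_posSemidef hN
  set W := (open MatrixOrder in CFC.sqrt M) with hWdef
  have hW : W * W = M := by
    open MatrixOrder in exact CFC.sqrt_mul_sqrt_self M (nonneg_iff_posSemidef.mpr hM)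
  have hWps : W.PosSemidef := by
    open MatrixOrder in exact nonneg_iff_posSemidef.mp (CFC.sqrt_nonneg M)
  -- det (X + M) = det X * det (1 + W X⁻¹ W) for X = A, B
  have factor : ∀ (X : Matrix (Fin d) (Fin d) ℝ), X.PosDef →
      (X + M).det = X.det * (1 + W * X⁻¹ * W).det := by
    intro X hX
    have hXX : X * X⁻¹ = 1 := mul_nonsing_inv X (isUnit_iff_ne_zero.mpr hX.det_pos.ne')
    have hfact : X + M = X * (1 + X⁻¹ * W * W) := by
      rw [Matrix.mul_add, Matrix.mul_one, ← Matrix.mul_assoc, ← Matrix.mul_assoc, hXX,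
        Matrix.one_mul, hW]
    rw [hfact, det_mul]
    congr 1
    rw [det_one_add_mul_comm (X⁻¹ * W) W, ← Matrix.mul_assoc]
  have hfA := factor A hA
  have hfB := factor B hB
  -- conjugated PSD pieces
  have hconj : ∀ (Y : Matrix (Fin d) (Fin d) ℝ), Y.PosSemidef → (W * Y * W).PosSemidef := by
    intro Y hY
    have h : W * Y * W = Wᴴ * Y * W := by rw [hWps.isHermitian.eq]
    rw [h]
    exact hY.conjTranspose_mul_mul_same W
  have hXB : (1 + W * B⁻¹ * W).PosDef :=
    Matrix.PosDef.add_posSemidef (Matrix.PosDef.one) (hconj _ hB.inv.posSemidef)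
  have hQ : (W * (A⁻¹ - B⁻¹) * W).PosSemidef := hconj _ (inv_sub_inv_psd hA hN)
  have hsum : (1 + W * B⁻¹ * W) + W * (A⁻¹ - B⁻¹) * W = 1 + W * A⁻¹ * W := by
    rw [Matrix.mul_sub, Matrix.sub_mul]
    abel
  have hle : (1 + W * B⁻¹ * W).det ≤ (1 + W * A⁻¹ * W).det := by
    have := det_mono_psd_add hXB hQ
    rwa [hsum] at this
  have hABM : A + M + N = B + M := by rw [hBdef]; abel
  rw [hABM, hfA, hfB]
  have h1 : (0:ℝ) < A.det := hA.det_pos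
  have h2 : (0:ℝ) < B.det := hB.det_pos
  have h3 : (0:ℝ) < (1 + W * B⁻¹ * W).det := hXB.det_pos
  nlinarith [mul_le_mul_of_nonneg_left hle (mul_pos h1 h2).le]

private lemma sum_psd {d k : ℕ} (Ms : Fin k → Matrix (Fin d) (Fin d) ℝ)
    (hMs : ∀ i, (Ms i).PosSemidef) (T : Finset (Fin k)) :
    (∑ i ∈ T, Ms i).PosSemidef :=
  Finset.sum_induction Ms Matrix.PosSemidef (fun _ _ ha hb => ha.add hb)
    Matrix.PosSemidef.zero (fun i _ => hMs i)

/-- submodularity of the log-det information gain of the Kalman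
measurement update. -/
theorem kalman_logdet_submodular {d k : ℕ}
    (Sig : Matrix (Fin d) (Fin d) ℝ) (hSig : Sig.PosDef)
    (Ms : Fin k → Matrix (Fin d) (Fin d) ℝ) (hMs : ∀ i, (Ms i).PosSemidef)
    (f : Finset (Fin k) → ℝ)
    (hf : ∀ T : Finset (Fin k), f T = Real.log (Sig⁻¹ + ∑ i ∈ T, Ms i).det) :
    ∀ T₁ T₂ : Finset (Fin k), T₁ ⊆ T₂ → ∀ j ∉ T₂,
      f (insert j T₁) - f T₁ ≥ f (insert j T₂) - f T₂ := by
  intro T₁ T₂ hT j hj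
  classical
  have hjT₁ : j ∉ T₁ := fun h => hj (hT h)
  set A := Sig⁻¹ + ∑ i ∈ T₁, Ms i with hAdef
  set Bm := Sig⁻¹ + ∑ i ∈ T₂, Ms i with hBdef
  set N := ∑ i ∈ T₂ \ T₁, Ms i with hNdef
  have hApd : A.PosDef := hSig.inv.add_posSemidef (sum_psd Ms hMs T₁)
  have hBeq : Bm = A + N := by
    rw [hBdef, hAdef, hNdef, ← Finset.sum_sdiff hT]
    abel
  have hBpd : Bm.PosDef := hBeq ▸ hApd.add_posSemidef (sum_psd Ms hMs _)
  have hA' : Sig⁻¹ + ∑ i ∈ insert j T₁, Ms i = A + Ms j := by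
    rw [Finset.sum_insert hjT₁, hAdef]; abel
  have hB' : Sig⁻¹ + ∑ i ∈ insert j T₂, Ms i = Bm + Ms j := by
    rw [Finset.sum_insert hj, hBdef]; abel
  have hAMpd : (A + Ms j).PosDef := hApd.add_posSemidef (hMs j)
  have hBMpd : (Bm + Ms j).PosDef := hBpd.add_posSemidef (hMs j)
  have key : (Bm + Ms j).det * A.det ≤ (A + Ms j).det * Bm.det := by
    have h := det_submodular_core hApd (hMs j) (sum_psd Ms hMs (T₂ \ T₁))
    rw [← hNdef, ← hBeq] at h
    have hmn : A + Ms j + N = Bm + Ms j := by rw [hBeq]; abel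
    rwa [hmn] at h
  have hlog := Real.log_le_log (mul_pos hBMpd.det_pos hApd.det_pos) key
  rw [Real.log_mul hBMpd.det_pos.ne' hApd.det_pos.ne',
    Real.log_mul hAMpd.det_pos.ne' hBpd.det_pos.ne'] at hlog
  rw [hf, hf, hf, hf, hA', hB']
  linarith
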